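/- Let v_1, …, v_d be LDP fan data having at least one singular cone. Suppose that whenever d ≥ 4 and an index k satisfies v_k = v_{k−1} + v_{k+1}, the cyclic sequence of length d−1 obtained by deleting v_k fails to be LDP fan data (this is the condition that X(Δ) cannot be obtained by blowing up a toric log del Pezzo surface at a nonsingular torus-fixed point). If there is an index i with det(v_i, v_{i+1}) = det(v_{i+1}, v_{i+2}) = 1 (i.e., σ_i and σ_{i+1} are nonsingular), then det(v_j, v_{j+1}) ≥ 2 for every index j not congruent to i or i+1 modulo d (i.e., every other cone is singular). -/

import Mathlib

/-- The determinant `det(u, w) = u₁w₂ − u₂w₁` of two integer vectors. -/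
def detZ (u w : ℤ × ℤ) : ℤ := u.1 * w.2 - u.2 * w.1

/-- The real vector associated to an integer vector. -/
noncomputable def toR2 (u : ℤ × ℤ) : ℝ × ℝ := ((u.1 : ℝ), (u.2 : ℝ))

/-- The cone `ℝ_{≥0} u + ℝ_{≥0} w` spanned by two integer vectors. -/
def coneOf (u w : ℤ × ℤ) : Set (ℝ × ℝ) :=
  {x | ∃ a b : ℝ, 0 ≤ a ∧ 0 ≤ b ∧ x = a • toR2 u + b • toR2 w}

/-- Complete fan data of length `d`: a cyclic sequence of primitive integer vectors with
`det(v_i, v_{i+1}) ≥ 1` whose successive cones cover `ℝ²` and have pairwise disjoint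
interiors. -/
def IsCompleteFanData (d : ℕ) (v : ZMod d → ℤ × ℤ) : Prop :=
  3 ≤ d ∧
  (∀ i, Int.gcd (v i).1 (v i).2 = 1) ∧
  (∀ i, 1 ≤ detZ (v i) (v (i + 1))) ∧
  (⋃ i, coneOf (v i) (v (i + 1))) = Set.univ ∧
  ∀ i j, i ≠ j →
    interior (coneOf (v i) (v (i + 1))) ∩ interior (coneOf (v j) (v (j + 1))) = ∅

/-- `f(i) = det(v_{i−1}, v_i) + det(v_i, v_{i+1}) + det(v_{i+1}, v_{i−1})`. -/
def fanF (d : ℕ) (v : ZMod d → ℤ × ℤ) (i : ZMod d) : ℤ :=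
  detZ (v (i - 1)) (v i) + detZ (v i) (v (i + 1)) + detZ (v (i + 1)) (v (i - 1))

/-- LDP fan data: complete fan data with `f(i) ≥ 1` for all `i`. -/
def IsLDPFanData (d : ℕ) (v : ZMod d → ℤ × ℤ) : Prop :=
  IsCompleteFanData d v ∧ ∀ i, 1 ≤ fanF d v i

/-- The number of singular cones, i.e. indices `i` with `det(v_i, v_{i+1}) ≥ 2`. -/
noncomputable def numSingular (d : ℕ) (v : ZMod d → ℤ × ℤ) : ℕ :=
  {i : ZMod d | 2 ≤ detZ (v i) (v (i + 1))}.ncard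

/-- Equivalence of fan data: some `GL(2, ℤ)` matrix maps the vector set of one
bijectively onto the vector set of the other. -/
def FanEquiv {d₁ d₂ : ℕ} (v : ZMod d₁ → ℤ × ℤ) (w : ZMod d₂ → ℤ × ℤ) : Prop :=
  ∃ M : Matrix (Fin 2) (Fin 2) ℤ, IsUnit M.det ∧
    (fun u : ℤ × ℤ => (M 0 0 * u.1 + M 0 1 * u.2, M 1 0 * u.1 + M 1 1 * u.2)) ''
      Set.range v = Set.range w

/-- The cyclic sequence of length `d − 1` obtained by deleting the vector `v_k`:
it lists `v_{k+1}, v_{k+2}, …, v_{k+d−1}`. -/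
def deleteAt {d : ℕ} (v : ZMod d → ℤ × ℤ) (k : ZMod d) : ZMod (d - 1) → ℤ × ℤ :=
  fun i => v (k + 1 + (i.val : ZMod d))

/-- The cyclic sequence of length `d + 1` obtained by inserting `v_k + v_{k+1}`
between `v_k` and `v_{k+1}`. -/
def insertAt {d : ℕ} (v : ZMod d → ℤ × ℤ) (k : ZMod d) : ZMod (d + 1) → ℤ × ℤ :=
  fun i =>
    if i.val ≤ k.val then v ((i.val : ℕ) : ZMod d)
    else if i.val = k.val + 1 then v k + v (k + 1)
    else v ((i.val - 1 : ℕ) : ZMod d)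

-- ===== auxiliary machinery =====

lemma detZ_sub_left (a b c : ℤ × ℤ) : detZ (a - b) c = detZ a c - detZ b c := by
  simp [detZ]; ring
lemma detZ_add_left (a b c : ℤ × ℤ) : detZ (a + b) c = detZ a c + detZ b c := by
  simp [detZ]; ring
lemma detZ_add_right (a b c : ℤ × ℤ) : detZ a (b + c) = detZ a b + detZ a c := by
  simp [detZ]; ring
lemma detZ_skew (a b : ℤ × ℤ) : detZ a b = -detZ b a := by
  simp [detZ]; ring
lemma detZ_self (a : ℤ × ℤ) : detZ a a = 0 := by
  simp [detZ]; ring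
lemma detZ_sub_right (a b c : ℤ × ℤ) : detZ a (b - c) = detZ a b - detZ a c := by
  simp [detZ]; ring
lemma toR2_add (u w : ℤ × ℤ) : toR2 (u + w) = toR2 u + toR2 w := by
  simp [toR2]

lemma cone_sub1 (u w : ℤ × ℤ) : coneOf u (u + w) ⊆ coneOf u w := by
  rintro x ⟨a, b, ha, hb, rfl⟩
  exact ⟨a + b, b, by linarith, hb, by rw [toR2_add]; module⟩
lemma cone_sub2 (u w : ℤ × ℤ) : coneOf (u + w) w ⊆ coneOf u w := by
  rintro x ⟨a, b, ha, hb, rfl⟩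
  exact ⟨a, a + b, ha, by linarith, by rw [toR2_add]; module⟩
lemma cone_split (u w : ℤ × ℤ) (x : ℝ × ℝ) (hx : x ∈ coneOf u w) :
    x ∈ coneOf u (u + w) ∨ x ∈ coneOf (u + w) w := by
  obtain ⟨a, b, ha, hb, rfl⟩ := hx
  rcases le_or_gt b a with hba | hba
  · exact Or.inl ⟨a - b, b, by linarith, hb, by rw [toR2_add]; module⟩
  · exact Or.inr ⟨a, b - a, ha, by linarith, by rw [toR2_add]; module⟩


lemma detZ_smul_left (g : ℤ) (a b : ℤ × ℤ) : detZ (g • a) b = g * detZ a b := by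
  simp [detZ, Prod.smul_fst, Prod.smul_snd, smul_eq_mul]; ring
lemma detZ_smul_right (g : ℤ) (a b : ℤ × ℤ) : detZ a (g • b) = g * detZ a b := by
  simp [detZ, Prod.smul_fst, Prod.smul_snd, smul_eq_mul]; ring
lemma detZ_neg_left (a b : ℤ × ℤ) : detZ (-a) b = -detZ a b := by simp [detZ]; ring
lemma detZ_neg_right (a b : ℤ × ℤ) : detZ a (-b) = -detZ a b := by simp [detZ]; ring


lemma cramerZ (u w : ℤ × ℤ) (h : detZ u w = 1) (z : ℤ × ℤ) :
    z = (detZ z w) • u + (detZ u z) • w := by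
  simp only [detZ] at h
  ext
  · show z.1 = _
    simp only [Prod.fst_add, Prod.smul_fst, smul_eq_mul, detZ]
    linear_combination (-z.1) * h
  · show z.2 = _
    simp only [Prod.snd_add, Prod.smul_snd, smul_eq_mul, detZ]
    linear_combination (-z.2) * h

lemma prim_smul (g : ℤ) (z u : ℤ × ℤ) (h : u = g • z) (hg : 1 ≤ g)
    (hp : Int.gcd u.1 u.2 = 1) : g = 1 := by
  have d1 : g ∣ u.1 := ⟨z.1, by rw [h]; simp [Prod.smul_def, smul_eq_mul]⟩
  have d2 : g ∣ u.2 := ⟨z.2, by rw [h]; simp [Prod.smul_def, smul_eq_mul]⟩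
  have hd := Int.dvd_coe_gcd d1 d2
  rw [hp] at hd
  have := Int.le_of_dvd one_pos (by exact_mod_cast hd)
  omega


noncomputable def detR (u w : ℝ × ℝ) : ℝ := u.1 * w.2 - u.2 * w.1

lemma detR_toR2 (u w : ℤ × ℤ) : detR (toR2 u) (toR2 w) = (detZ u w : ℝ) := by
  simp [detR, detZ, toR2]

lemma cramerR (u w y : ℝ × ℝ) : detR y w • u + detR u y • w = detR u w • y := by
  ext
  · simp only [Prod.fst_add, Prod.smul_fst, smul_eq_mul, detR]; ring
  · simp only [Prod.snd_add, Prod.smul_snd, smul_eq_mul, detR]; ring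

lemma mem_coneOf_of_detR (u w : ℤ × ℤ) (y : ℝ × ℝ) (hD : 1 ≤ detZ u w)
    (h1 : 0 ≤ detR y (toR2 w)) (h2 : 0 ≤ detR (toR2 u) y) : y ∈ coneOf u w := by
  have hD' : (0:ℝ) < detR (toR2 u) (toR2 w) := by
    rw [detR_toR2]; exact_mod_cast hD
  have hne := ne_of_gt hD'
  refine ⟨detR y (toR2 w) / detR (toR2 u) (toR2 w), detR (toR2 u) y / detR (toR2 u) (toR2 w),
    div_nonneg h1 hD'.le, div_nonneg h2 hD'.le, ?_⟩
  rw [div_eq_inv_mul, div_eq_inv_mul, ← smul_smul, ← smul_smul, ← smul_add, cramerR,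
    smul_smul, inv_mul_cancel₀ hne, one_smul]

lemma mem_coneOf_of_det (u w z : ℤ × ℤ) (hD : 1 ≤ detZ u w)
    (h1 : 0 ≤ detZ z w) (h2 : 0 ≤ detZ u z) : toR2 z ∈ coneOf u w := by
  apply mem_coneOf_of_detR u w _ hD
  · rw [detR_toR2]; exact_mod_cast h1
  · rw [detR_toR2]; exact_mod_cast h2

lemma mem_coneOf_left (u w : ℤ × ℤ) : toR2 u ∈ coneOf u w :=
  ⟨1, 0, zero_le_one, le_refl 0, by simp⟩

def oc (u w : ℤ × ℤ) : Set (ℝ × ℝ) :=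
  {y | 0 < detR (toR2 u) y ∧ 0 < detR y (toR2 w)}

lemma oc_isOpen (u w : ℤ × ℤ) : IsOpen (oc u w) := by
  have h1 : IsOpen {y : ℝ × ℝ | 0 < detR (toR2 u) y} :=
    isOpen_lt continuous_const (by unfold detR; fun_prop)
  have h2 : IsOpen {y : ℝ × ℝ | 0 < detR y (toR2 w)} :=
    isOpen_lt continuous_const (by unfold detR; fun_prop)
  exact h1.inter h2

lemma oc_subset_interior (u w : ℤ × ℤ) (hD : 1 ≤ detZ u w) :
    oc u w ⊆ interior (coneOf u w) :=
  interior_maximal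
    (fun y hy => mem_coneOf_of_detR u w y hD hy.2.le hy.1.le) (oc_isOpen u w)

section Fan
variable {d : ℕ} (v : ZMod d → ℤ × ℤ)

/-- key separation lemma T' -/
lemma sep' (hdet : ∀ i, 1 ≤ detZ (v i) (v (i + 1)))
    (hdisj : ∀ a b : ZMod d, a ≠ b →
      interior (coneOf (v a) (v (a + 1))) ∩ interior (coneOf (v b) (v (b + 1))) = ∅)
    (a b : ZMod d) (hab : a ≠ b) (x : ℝ × ℝ)
    (hxb : x ∈ coneOf (v b) (v (b + 1)))
    (hxa : x ∈ interior (coneOf (v a) (v (a + 1)))) : False := by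
  obtain ⟨s, t, hs, ht, hxeq⟩ := hxb
  set B := toR2 (v b) with hB
  set B' := toR2 (v (b + 1)) with hB'
  set g : ℝ → ℝ × ℝ := fun ε => x + ε • (B + B') with hg
  have hgc : Continuous g := by unfold g; fun_prop
  have hg0 : g 0 = x := by simp [hg]
  have hev : ∀ᶠ ε in nhds (0:ℝ), g ε ∈ interior (coneOf (v a) (v (a + 1))) := by
    have hca := hgc.continuousAt (x := (0:ℝ))
    have hmem : interior (coneOf (v a) (v (a + 1))) ∈ nhds (g 0) := by
      rw [hg0]; exact isOpen_interior.mem_nhds hxa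
    exact hca.preimage_mem_nhds hmem
  have hev' : ∀ᶠ ε in nhdsWithin (0:ℝ) (Set.Ioi 0),
      g ε ∈ interior (coneOf (v a) (v (a + 1))) := hev.filter_mono nhdsWithin_le_nhds
  have hpos : ∀ᶠ ε in nhdsWithin (0:ℝ) (Set.Ioi 0), (0:ℝ) < ε := self_mem_nhdsWithin
  obtain ⟨ε, hε1, hε2⟩ := (hev'.and hpos).exists
  have hDb : (0:ℝ) < detR B B' := by
    rw [hB, hB', detR_toR2]; exact_mod_cast hdet b
  have hgb : g ε ∈ oc (v b) (v (b + 1)) := by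
    constructor
    · show 0 < detR B (g ε)
      have hcalc : detR B (g ε) = (t + ε) * detR B B' := by
        simp only [hg, hxeq, detR, Prod.fst_add, Prod.snd_add, Prod.smul_fst, Prod.smul_snd,
          smul_eq_mul]
        ring
      rw [hcalc]; positivity
    · show 0 < detR (g ε) B'
      have hcalc : detR (g ε) B' = (s + ε) * detR B B' := by
        simp only [hg, hxeq, detR, Prod.fst_add, Prod.snd_add, Prod.smul_fst, Prod.smul_snd,
          smul_eq_mul]
        ring
      rw [hcalc]; positivity
  have hgb' : g ε ∈ interior (coneOf (v b) (v (b + 1))) :=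
    oc_subset_interior _ _ (hdet b) hgb
  have hdd := hdisj a b hab
  rw [Set.eq_empty_iff_forall_notMem] at hdd
  exact hdd (g ε) ⟨hε1, hgb'⟩

lemma sep (hdet : ∀ i, 1 ≤ detZ (v i) (v (i + 1)))
    (hdisj : ∀ a b : ZMod d, a ≠ b →
      interior (coneOf (v a) (v (a + 1))) ∩ interior (coneOf (v b) (v (b + 1))) = ∅)
    (a b : ZMod d) (hab : a ≠ b) (z : ℤ × ℤ)
    (hzb : toR2 z ∈ coneOf (v b) (v (b + 1)))
    (h1 : 0 < detZ (v a) z) (h2 : 0 < detZ z (v (a + 1))) : False := by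
  apply sep' v hdet hdisj a b hab (toR2 z) hzb
  apply oc_subset_interior _ _ (hdet a)
  constructor
  · rw [detR_toR2]; exact_mod_cast h1
  · rw [detR_toR2]; exact_mod_cast h2

end Fan


lemma blowdown (d : ℕ) (v : ZMod d → ℤ × ℤ) (hd4 : 4 ≤ d)
    (h : IsLDPFanData d v) (k : ZMod d) (hk : v k = v (k - 1) + v (k + 1)) :
    IsLDPFanData (d - 1) (deleteAt v k) := by
  obtain ⟨⟨hd3, hprim, hdet, hcover, hdisj⟩, hf⟩ := h
  haveI : NeZero d := ⟨by omega⟩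
  haveI : NeZero (d - 1) := ⟨by omega⟩
  set e := d - 1 with he
  have he3 : 3 ≤ e := by omega
  haveI : Fact (1 < e) := ⟨by omega⟩
  have hed : e < d := by omega
  have hk' : v (k - 1) = v k - v (k + 1) := by rw [hk]; ring
  set F : ZMod e → ZMod d := fun i => k + 1 + (i.val : ZMod d) with hF
  have hdel : ∀ i, deleteAt v k i = v (F i) := fun i => rfl
  -- successor lemmas
  have hvalsucc : ∀ i : ZMod e, i.val + 1 < e → (i + 1).val = i.val + 1 := by
    intro i hi
    rw [ZMod.val_add, ZMod.val_one]
    exact Nat.mod_eq_of_lt hi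
  have hwrapsucc : ∀ i : ZMod e, i.val = e - 1 → i + 1 = 0 := by
    intro i hi
    have hv : (i + 1).val = 0 := by
      rw [ZMod.val_add, ZMod.val_one, hi]
      have hee : e - 1 + 1 = e := by omega
      rw [hee, Nat.mod_self]
    apply ZMod.val_injective
    rw [hv, ZMod.val_zero]
  have hFS : ∀ i : ZMod e, i.val + 1 < e → F (i + 1) = F i + 1 := by
    intro i hi
    show k + 1 + (((i+1).val : ℕ) : ZMod d) = k + 1 + (i.val : ZMod d) + 1
    rw [hvalsucc i hi]
    push_cast
    ring
  have hFw : ∀ i : ZMod e, i.val = e - 1 → F i = k - 1 := by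
    intro i hi
    show k + 1 + ((i.val : ℕ) : ZMod d) = k - 1
    rw [hi]
    have : ((e - 1 : ℕ) : ZMod d) = -2 := by
      have h2 : ((e - 1 : ℕ) : ZMod d) + 2 = ((d : ℕ) : ZMod d) := by
        have : (e - 1) + 2 = d := by omega
        rw [← this]
        push_cast
        ring
      rw [ZMod.natCast_self] at h2
      linear_combination h2
    rw [this]
    ring
  have hF0 : F 0 = k + 1 := by
    show k + 1 + (((0 : ZMod e).val : ℕ) : ZMod d) = k + 1
    rw [ZMod.val_zero]
    push_cast
    ring
  -- F i never equals k
  have hFnk : ∀ i : ZMod e, F i ≠ k := by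
    intro i hFi
    have h1 : ((i.val + 1 : ℕ) : ZMod d) = 0 := by
      have hh : k + 1 + (i.val : ZMod d) = k := hFi
      push_cast
      linear_combination hh
    rw [ZMod.natCast_eq_zero_iff] at h1
    have := ZMod.val_lt i
    have := Nat.le_of_dvd (by omega) h1
    omega
  -- F injective
  have hFinj : ∀ i j : ZMod e, F i = F j → i = j := by
    intro i j hij
    have h1 : ((i.val : ℕ) : ZMod d) = ((j.val : ℕ) : ZMod d) := by
      have : k + 1 + (i.val : ZMod d) = k + 1 + (j.val : ZMod d) := hij
      exact add_left_cancel this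
    have h2 : i.val = j.val := by
      have hi := ZMod.val_lt i
      have hj := ZMod.val_lt j
      have := congrArg ZMod.val h1
      rwa [ZMod.val_cast_of_lt (by omega), ZMod.val_cast_of_lt (by omega)] at this
    exact ZMod.val_injective _ h2
  -- F i ≠ k - 1 when i.val < e - 1
  have hFnk1 : ∀ i : ZMod e, i.val + 1 < e → F i ≠ k - 1 := by
    intro i hi hFi
    have h1 : ((i.val + 2 : ℕ) : ZMod d) = 0 := by
      have hh : k + 1 + (i.val : ZMod d) = k - 1 := hFi
      push_cast
      linear_combination hh
    rw [ZMod.natCast_eq_zero_iff] at h1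
    have := Nat.le_of_dvd (by omega) h1
    omega
  -- the wrap index
  set lam : ZMod e := ((e - 1 : ℕ) : ZMod e) with hlam
  have hlamval : lam.val = e - 1 := ZMod.val_cast_of_lt (by omega)
  have hFlam : F lam = k - 1 := hFw lam hlamval
  have hlamsucc : lam + 1 = 0 := hwrapsucc lam hlamval
  -- new determinant condition
  have hdet' : ∀ i : ZMod e, 1 ≤ detZ (deleteAt v k i) (deleteAt v k (i + 1)) := by
    intro i
    rw [hdel, hdel]
    by_cases hi : i.val + 1 < e
    · rw [hFS i hi]; exact hdet (F i)
    · have hie : i.val = e - 1 := by have := ZMod.val_lt i; omega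
      rw [hFw i hie, hwrapsucc i hie, hF0]
      have hcalc : detZ (v (k - 1)) (v (k + 1)) = detZ (v (k - 1)) (v ((k - 1) + 1)) := by
        rw [sub_add_cancel, hk, detZ_add_right]
        have : detZ (v (k - 1)) (v (k - 1)) = 0 := by simp [detZ]; ring
        rw [this]; ring
      rw [hcalc]; exact hdet (k - 1)
  -- covering
  have hcover' : (⋃ i, coneOf (deleteAt v k i) (deleteAt v k (i + 1))) = Set.univ := by
    rw [Set.eq_univ_iff_forall]
    intro x
    have hx : x ∈ ⋃ m, coneOf (v m) (v (m + 1)) := by rw [hcover]; trivial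
    obtain ⟨m, hm⟩ := Set.mem_iUnion.mp hx
    rw [Set.mem_iUnion]
    have hmerge : x ∈ coneOf (v (k - 1)) (v (k + 1)) → x ∈ coneOf (deleteAt v k lam) (deleteAt v k (lam + 1)) := by
      intro hxm
      rw [hdel, hdel, hFlam, hlamsucc, hF0]
      exact hxm
    by_cases hm1 : m = k - 1
    · subst hm1
      refine ⟨lam, hmerge ?_⟩
      rw [sub_add_cancel] at hm
      rw [hk] at hm
      exact cone_sub1 _ _ hm
    · by_cases hm2 : m = k
      · subst hm2
        refine ⟨lam, hmerge ?_⟩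
        rw [hk] at hm
        exact cone_sub2 _ _ hm
      · -- generic index
        set t := (m - (k + 1)).val with ht
        have htv : ((t : ℕ) : ZMod d) = m - (k + 1) := ZMod.natCast_rightInverse _
        have htd : t < d := ZMod.val_lt _
        have hcastd1 : ((d - 1 : ℕ) : ZMod d) = -1 := by
          have h2 : ((d - 1 : ℕ) : ZMod d) + 1 = ((d : ℕ) : ZMod d) := by
            have hh : (d - 1) + 1 = d := by omega
            rw [← hh]; push_cast; ring
          rw [ZMod.natCast_self] at h2
          linear_combination h2
        have hcastd2 : ((d - 2 : ℕ) : ZMod d) = -2 := by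
          have h2 : ((d - 2 : ℕ) : ZMod d) + 2 = ((d : ℕ) : ZMod d) := by
            have hh : (d - 2) + 2 = d := by omega
            rw [← hh]; push_cast; ring
          rw [ZMod.natCast_self] at h2
          linear_combination h2
        have htn1 : t ≠ d - 1 := by
          intro hteq
          apply hm2
          have : m - (k + 1) = -1 := by rw [← htv, hteq, hcastd1]
          have : m = k := by linear_combination this
          exact this
        have htn2 : t ≠ d - 2 := by
          intro hteq
          apply hm1
          have : m - (k + 1) = -2 := by rw [← htv, hteq, hcastd2]
          have : m = k - 1 := by linear_combination this
          exact this
        have hte : t < e - 1 := by omega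
        set i : ZMod e := ((t : ℕ) : ZMod e) with hi
        have hival : i.val = t := ZMod.val_cast_of_lt (by omega)
        have hFim : F i = m := by
          show k + 1 + ((i.val : ℕ) : ZMod d) = m
          rw [hival, htv]
          ring
        refine ⟨i, ?_⟩
        rw [hdel, hdel, hFS i (by rw [hival]; omega), hFim]
        exact hm
  -- helper for disjointness: merged cone vs original cone
  have hmix : ∀ (b : ZMod e), b.val + 1 < e → ∀ x : ℝ × ℝ,
      x ∈ coneOf (v (k - 1)) (v (k + 1)) →
      x ∈ interior (coneOf (v (F b)) (v (F b + 1))) → False := by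
    intro b hb x hx1 hx2
    have hsplit := cone_split (v (k - 1)) (v (k + 1)) x hx1
    rw [← hk] at hsplit
    rcases hsplit with hc | hc
    · have hco : x ∈ coneOf (v (k - 1)) (v ((k - 1) + 1)) := by rw [sub_add_cancel]; exact hc
      exact sep' v hdet hdisj (F b) (k - 1) (hFnk1 b hb) x hco hx2
    · exact sep' v hdet hdisj (F b) k (hFnk b) x hc hx2
  -- disjointness
  have hdisj' : ∀ α β : ZMod e, α ≠ β →
      interior (coneOf (deleteAt v k α) (deleteAt v k (α + 1))) ∩
        interior (coneOf (deleteAt v k β) (deleteAt v k (β + 1))) = ∅ := by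
    intro α β hne
    rw [Set.eq_empty_iff_forall_notMem]
    rintro x ⟨hxa, hxb⟩
    by_cases ha : α.val + 1 < e
    · by_cases hb : β.val + 1 < e
      · -- both generic
        have hFne : F α ≠ F β := fun hc => hne (hFinj _ _ hc)
        have hd2 := hdisj (F α) (F β) hFne
        rw [Set.eq_empty_iff_forall_notMem] at hd2
        apply hd2 x
        constructor
        · rw [← hFS α ha, ← hdel, ← hdel]; exact hxa
        · rw [← hFS β hb, ← hdel, ← hdel]; exact hxb
      · -- β is wrap
        have hbe : β.val = e - 1 := by have := ZMod.val_lt β; omega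
        have hxb' : x ∈ coneOf (v (k - 1)) (v (k + 1)) := by
          have := interior_subset hxb
          rwa [hdel, hdel, hFw β hbe, hwrapsucc β hbe, hF0] at this
        apply hmix α ha x hxb'
        rw [← hFS α ha, ← hdel, ← hdel]; exact hxa
    · have hae : α.val = e - 1 := by have := ZMod.val_lt α; omega
      by_cases hb : β.val + 1 < e
      · have hxa' : x ∈ coneOf (v (k - 1)) (v (k + 1)) := by
          have := interior_subset hxa
          rwa [hdel, hdel, hFw α hae, hwrapsucc α hae, hF0] at this
        apply hmix β hb x hxa'
        rw [← hFS β hb, ← hdel, ← hdel]; exact hxb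
      · have hbe : β.val = e - 1 := by have := ZMod.val_lt β; omega
        exact hne (ZMod.val_injective _ (by rw [hae, hbe]))
  -- f conditions
  have hf' : ∀ α : ZMod e, 1 ≤ fanF e (deleteAt v k) α := by
    intro α
    unfold fanF
    rw [hdel, hdel, hdel]
    by_cases ha0 : α.val = 0
    · -- α = 0 case
      have hα : α = 0 := ZMod.val_injective _ (by rw [ha0, ZMod.val_zero])
      subst hα
      have hγ : (0 : ZMod e) - 1 + 1 = 0 := sub_add_cancel 0 1
      have hγv : ((0 : ZMod e) - 1).val = e - 1 := by
        by_contra hc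
        have h1 : ((0:ZMod e) - 1).val + 1 < e := by have := ZMod.val_lt ((0:ZMod e) - 1); omega
        have := hvalsucc _ h1
        rw [hγ, ZMod.val_zero] at this
        omega
      rw [hFw _ hγv, hF0, hFS 0 (by rw [ZMod.val_zero]; omega), hF0]
      -- goal: 1 ≤ detZ (v (k-1)) (v (k+1)) + detZ (v (k+1)) (v (k+1+1)) + detZ (v (k+1+1)) (v (k-1))
      have hfk := hf (k + 1)
      unfold fanF at hfk
      rw [add_sub_cancel_right] at hfk
      have hdk1 := hdet (k + 1)
      rw [hk', detZ_sub_left, detZ_sub_right]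
      linarith [hfk, hdk1, detZ_self (v (k + 1)), detZ_skew (v (k + 1)) (v (k + 1 + 1))]
    · by_cases hae : α.val = e - 1
      · -- wrap case
        have hFα : F α = k - 1 := hFw α hae
        have hsucc : α + 1 = 0 := hwrapsucc α hae
        have hγ : α - 1 + 1 = α := sub_add_cancel α 1
        have hγv : (α - 1).val + 1 < e := by
          by_contra hc
          have h1 : (α - 1).val = e - 1 := by have := ZMod.val_lt (α - 1); omega
          have := hwrapsucc _ h1
          rw [hγ] at this
          rw [this, ZMod.val_zero] at ha0
          exact ha0 rfl
        have hFγ : F (α - 1) = F α - 1 := by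
          have hthis := hFS (α - 1) hγv
          rw [hγ] at hthis
          exact eq_sub_of_add_eq hthis.symm
        rw [hFγ, hFα, hsucc, hF0]
        -- goal: 1 ≤ detZ (v (k-1-1)) (v (k-1)) + detZ (v (k-1)) (v (k+1)) + detZ (v (k+1)) (v (k-1-1))
        have hfk := hf (k - 1)
        unfold fanF at hfk
        rw [sub_add_cancel] at hfk
        have hdk2 := hdet (k - 1 - 1)
        rw [sub_add_cancel] at hdk2
        rw [hk, detZ_add_left, detZ_add_right] at hfk
        linarith [hfk, hdk2, detZ_self (v (k - 1)), detZ_skew (v (k - 1)) (v (k - 1 - 1))]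
      · -- generic case
        have hγ : α - 1 + 1 = α := sub_add_cancel α 1
        have hγv : (α - 1).val + 1 < e := by
          by_contra hc
          have h1 : (α - 1).val = e - 1 := by have := ZMod.val_lt (α - 1); omega
          have := hwrapsucc _ h1
          rw [hγ] at this
          rw [this, ZMod.val_zero] at ha0
          exact ha0 rfl
        have hFγ : F (α - 1) = F α - 1 := by
          have hthis := hFS (α - 1) hγv
          rw [hγ] at hthis
          exact eq_sub_of_add_eq hthis.symm
        have haa : α.val + 1 < e := by have := ZMod.val_lt α; omega
        rw [hFγ, hFS α haa]
        have hfk := hf (F α)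
        unfold fanF at hfk
        exact hfk
  exact ⟨⟨by omega, fun i => hprim (F i), hdet', hcover', hdisj'⟩, hf'⟩


section FanMain
variable {d : ℕ} {v : ZMod d → ℤ × ℤ}

/-- the (L) lemma : p ≥ 0 -/
lemma lemL (hf : ∀ i, 1 ≤ fanF d v i)
    (NB : ∀ k : ZMod d, v k ≠ v (k - 1) + v (k + 1)) (k : ZMod d)
    (hk1 : detZ (v k) (v (k + 1)) = 1) (hk2 : detZ (v (k + 1)) (v (k + 1 + 1)) = 1) :
    detZ (v k) (v (k + 1 + 1)) ≤ 0 := by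
  have hfk := hf (k + 1)
  unfold fanF at hfk
  rw [add_sub_cancel_right] at hfk
  rw [hk1, hk2] at hfk
  have hle : detZ (v k) (v (k + 1 + 1)) ≤ 1 := by
    have := detZ_skew (v (k + 1 + 1)) (v k)
    linarith
  rcases hle.lt_or_eq with hlt | heq
  · omega
  · exfalso
    apply NB (k + 1)
    rw [add_sub_cancel_right]
    have hVE := cramerZ (v k) (v (k + 1)) hk1 (v (k + 1 + 1))
    rw [heq] at hVE
    have hm1 : detZ (v (k + 1 + 1)) (v (k + 1)) = -1 := by
      rw [detZ_skew, hk2]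
    rw [hm1] at hVE
    rw [hVE]
    module

/-- the forward edge-point lemma (WM) -/
lemma lemWM (hdet : ∀ i, 1 ≤ detZ (v i) (v (i + 1)))
    (hf : ∀ i, 1 ≤ fanF d v i) (hprim : ∀ i, Int.gcd (v i).1 (v i).2 = 1)
    (NB : ∀ k : ZMod d, v k ≠ v (k - 1) + v (k + 1)) (j : ZMod d)
    (hj : detZ (v j) (v (j + 1)) = 1) :
    1 ≤ detZ (v (j + 1) - v j) (v (j + 1 + 1)) := by
  have hfj := hf (j + 1)
  unfold fanF at hfj
  rw [add_sub_cancel_right] at hfj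
  have hs : detZ (v (j + 1) - v j) (v (j + 1 + 1)) =
      detZ (v (j + 1)) (v (j + 1 + 1)) + detZ (v (j + 1 + 1)) (v j) := by
    rw [detZ_sub_left]
    have := detZ_skew (v j) (v (j + 1 + 1))
    linarith
  have hge : 0 ≤ detZ (v (j + 1) - v j) (v (j + 1 + 1)) := by
    rw [hs, hj] at *
    linarith
  rcases hge.lt_or_eq with hlt | heq
  · omega
  · exfalso
    apply NB (j + 1)
    rw [add_sub_cancel_right]
    -- v (j+2) = D • (v (j+1) - v j) with D = detZ (v (j+1)) (v (j+2))
    have hVE := cramerZ (v j) (v (j + 1)) hj (v (j + 1 + 1))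
    set D := detZ (v (j + 1)) (v (j + 1 + 1)) with hD
    have hc1 : detZ (v (j + 1 + 1)) (v (j + 1)) = -D := by rw [detZ_skew]
    have hc2 : detZ (v j) (v (j + 1 + 1)) = D := by
      have h0 := heq.symm
      rw [hs] at h0
      have := detZ_skew (v (j + 1 + 1)) (v j)
      linarith
    rw [hc1, hc2] at hVE
    have hVE' : v (j + 1 + 1) = D • (v (j + 1) - v j) := by
      rw [hVE]; module
    have hD1 : D = 1 := prim_smul D _ _ hVE' (hdet (j + 1)) (hprim (j + 1 + 1))
    rw [hD1] at hVE'
    rw [one_smul] at hVE'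
    rw [hVE']
    ring

/-- the backward edge-point lemma (ZM) -/
lemma lemZM (hdet : ∀ i, 1 ≤ detZ (v i) (v (i + 1)))
    (hf : ∀ i, 1 ≤ fanF d v i) (hprim : ∀ i, Int.gcd (v i).1 (v i).2 = 1)
    (NB : ∀ k : ZMod d, v k ≠ v (k - 1) + v (k + 1)) (k : ZMod d)
    (hk : detZ (v k) (v (k + 1)) = 1) :
    1 ≤ detZ (v (k - 1)) (v k - v (k + 1)) := by
  have hfk := hf k
  unfold fanF at hfk
  have hs : detZ (v (k - 1)) (v k - v (k + 1)) =
      detZ (v (k - 1)) (v k) + detZ (v (k + 1)) (v (k - 1)) := by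
    rw [detZ_sub_right]
    have := detZ_skew (v (k - 1)) (v (k + 1))
    linarith
  have hge : 0 ≤ detZ (v (k - 1)) (v k - v (k + 1)) := by
    rw [hs]
    rw [hk] at hfk
    linarith
  rcases hge.lt_or_eq with hlt | heq
  · omega
  · exfalso
    apply NB k
    have hVE := cramerZ (v k) (v (k + 1)) hk (v (k - 1))
    set g := detZ (v (k - 1)) (v k) with hg
    have hdkm := hdet (k - 1)
    rw [sub_add_cancel] at hdkm
    have hc1 : detZ (v (k - 1)) (v (k + 1)) = g := by
      have h0 := heq.symm
      rw [hs] at h0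
      have := detZ_skew (v (k + 1)) (v (k - 1))
      linarith
    have hc2 : detZ (v k) (v (k - 1)) = -g := by rw [detZ_skew]
    rw [hc1, hc2] at hVE
    have hVE' : v (k - 1) = g • (v k - v (k + 1)) := by rw [hVE]; module
    have hg1 : g = 1 := prim_smul g _ _ hVE' hdkm (hprim (k - 1))
    rw [hg1, one_smul] at hVE'
    rw [hVE']
    ring

/-- three consecutive nonsingular cones, d ≥ 5 : impossible -/
lemma lemL5a (hdet : ∀ i, 1 ≤ detZ (v i) (v (i + 1)))
    (hdisj : ∀ a b : ZMod d, a ≠ b →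
      interior (coneOf (v a) (v (a + 1))) ∩ interior (coneOf (v b) (v (b + 1))) = ∅)
    (hf : ∀ i, 1 ≤ fanF d v i) (hprim : ∀ i, Int.gcd (v i).1 (v i).2 = 1)
    (NB : ∀ k : ZMod d, v k ≠ v (k - 1) + v (k + 1))
    (i : ZMod d)
    (h1 : detZ (v i) (v (i + 1)) = 1)
    (h2 : detZ (v (i + 1)) (v (i + 2)) = 1)
    (h3 : detZ (v (i + 2)) (v (i + 3)) = 1)
    (hne31 : i + 2 ≠ i - 1) (hne41 : i + 3 ≠ i - 1) : False := by
  have e1 : i + 1 + 1 = i + 2 := by ring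
  have e2 : i + 2 + 1 = i + 3 := by ring
  have e3 : i + 3 + 1 = i + 4 := by ring
  have e4 : i - 1 + 1 = i := sub_add_cancel i 1
  -- p and VE2
  set p := -detZ (v i) (v (i + 2)) with hpdef
  have hp : 0 ≤ p := by
    have := lemL hf NB i h1 (by rw [e1]; exact h2)
    rw [e1] at this
    omega
  have hVE2 : v (i + 2) = (-1 : ℤ) • v i + (-p) • v (i + 1) := by
    have hVE := cramerZ (v i) (v (i + 1)) h1 (v (i + 2))
    have hc1 : detZ (v (i + 2)) (v (i + 1)) = -1 := by rw [detZ_skew, h2]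
    have hc2 : detZ (v i) (v (i + 2)) = -p := by omega
    rw [hc1, hc2] at hVE
    exact hVE
  -- q and VE3
  set q := -detZ (v (i + 1)) (v (i + 3)) with hqdef
  have hq : 0 ≤ q := by
    have := lemL hf NB (i + 1) (by rw [e1]; exact h2) (by rw [e1, e2]; exact h3)
    rw [e1, e2] at this
    omega
  have hVE3 : v (i + 3) = (-1 : ℤ) • v (i + 1) + (-q) • v (i + 2) := by
    have hVE := cramerZ (v (i + 1)) (v (i + 2)) h2 (v (i + 3))
    have hc1 : detZ (v (i + 3)) (v (i + 2)) = -1 := by rw [detZ_skew, h3]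
    have hc2 : detZ (v (i + 1)) (v (i + 3)) = -q := by omega
    rw [hc1, hc2] at hVE
    exact hVE
  -- the point z = v i - v (i+1)
  set z := v i - v (i + 1) with hzdef
  have hz1 : 1 ≤ detZ (v (i - 1)) z := lemZM hdet hf hprim NB i h1
  have hz2 : detZ z (v i) = 1 := by
    rw [hzdef, detZ_sub_left, detZ_self]
    have := detZ_skew (v (i + 1)) (v i)
    linarith
  have hzi1 : detZ z (v (i + 1)) = 1 := by
    rw [hzdef, detZ_sub_left, detZ_self]
    linarith
  have hmemz : toR2 z ∈ coneOf (v (i - 1)) (v (i - 1 + 1)) := by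
    rw [e4]
    refine mem_coneOf_of_det _ _ _ ?_ (by omega) (by omega)
    have := hdet (i - 1)
    rwa [e4] at this
  -- step 1 : detZ (v (i+2)) z = 1 + p
  have hs1 : detZ (v (i + 2)) z = 1 + p := by
    rw [hVE2, hzdef]
    simp only [detZ_add_left, detZ_smul_left, detZ_sub_right, detZ_self]
    have ha := detZ_skew (v (i + 1)) (v i)
    nlinarith [h1, ha]
  have hT1 : detZ z (v (i + 3)) ≤ 0 := by
    by_contra hc
    push_neg at hc
    apply sep v hdet hdisj (i + 2) (i - 1) hne31 z hmemz (by omega)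
    rwa [e2]
  have hzv3 : detZ z (v (i + 3)) = -1 + q * (1 + p) := by
    rw [hVE3]
    simp only [detZ_add_right, detZ_smul_right]
    have hz2' : detZ z (v (i + 2)) = -(1 + p) := by
      have := detZ_skew z (v (i + 2))
      omega
    rw [hzi1, hz2']
    ring
  have hqp1 : q * (1 + p) ≤ 1 := by omega
  by_cases hqp : q * (1 + p) = 1
  · -- q = 1, p = 0, v (i+3) = z
    have hq1 : q = 1 := by nlinarith
    have hp0 : p = 0 := by nlinarith
    have hz3 : v (i + 3) = z := by
      rw [hVE3, hVE2, hzdef, hq1, hp0]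
      module
    exact sep v hdet hdisj (i - 1) (i + 3) (Ne.symm hne41) (v (i + 3))
      (mem_coneOf_left _ _)
      (by rw [hz3]; omega) (by rw [e4, hz3, hz2]; omega)
  · have hqple : q * (1 + p) ≤ 0 := by
      rcases hqp1.lt_or_eq with hlt | heq
      · have := Int.add_one_le_iff.mpr hlt
        linarith
      · exact absurd heq hqp
    have hq0 : q = 0 := by nlinarith [mul_nonneg hq hp]
    have hs3 : detZ (v (i + 3)) z = 1 := by
      rw [hVE3, hq0]
      simp only [detZ_add_left, detZ_smul_left]
      have := detZ_skew (v (i + 1)) z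
      omega
    have hT2 : detZ z (v (i + 4)) ≤ 0 := by
      by_contra hc
      push_neg at hc
      apply sep v hdet hdisj (i + 3) (i - 1) hne41 z hmemz (by omega)
      rwa [e3]
    -- A and B
    obtain ⟨A, hAdef⟩ : ∃ A, A = -detZ (v (i + 1)) (v (i + 4)) := ⟨_, rfl⟩
    obtain ⟨B, hBdef⟩ : ∃ B, B = detZ (v i) (v (i + 4)) := ⟨_, rfl⟩
    have hA1 : 1 ≤ A := by
      have hd3 := hdet (i + 3)
      rw [e3] at hd3
      have : detZ (v (i + 3)) (v (i + 4)) = A := by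
        rw [hVE3, hq0]
        simp only [detZ_add_left, detZ_smul_left]
        omega
      omega
    have hAB : B + A ≤ 0 := by
      have : detZ z (v (i + 4)) = B + A := by
        rw [hzdef, detZ_sub_left]
        omega
      omega
    have hfAB : 1 ≤ 1 + A + (B - p * A) := by
      have hfk := hf (i + 3)
      unfold fanF at hfk
      have e5 : i + 3 - 1 = i + 2 := by ring
      rw [e5, e3] at hfk
      have hx1 : detZ (v (i + 2)) (v (i + 3)) = 1 := h3
      have hx2 : detZ (v (i + 3)) (v (i + 4)) = A := by
        rw [hVE3, hq0]
        simp only [detZ_add_left, detZ_smul_left]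
        omega
      have hx3 : detZ (v (i + 4)) (v (i + 2)) = B - p * A := by
        rw [hVE2]
        simp only [detZ_add_right, detZ_smul_right]
        have k1 : detZ (v (i + 4)) (v i) = -B := by
          have := detZ_skew (v i) (v (i + 4))
          omega
        have k2 : detZ (v (i + 4)) (v (i + 1)) = A := by
          have := detZ_skew (v (i + 1)) (v (i + 4))
          omega
        rw [k1, k2]
        ring
      rw [hx1, hx2, hx3] at hfk
      linarith
    have hpA0 : 0 ≤ p * A := mul_nonneg hp (by linarith only [hA1])
    have hpAle : p * A ≤ 0 := by linarith only [hfAB, hAB]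
    have hpAeq : p * A = 0 := le_antisymm hpAle hpA0
    have hBA : B = -A := by linarith only [hAB, hfAB, hpAeq]
    -- v (i+4) = A • z
    have hVE4 : v (i + 4) = A • z := by
      have hVE := cramerZ (v i) (v (i + 1)) h1 (v (i + 4))
      have hc1 : detZ (v (i + 4)) (v (i + 1)) = A := by
        have := detZ_skew (v (i + 1)) (v (i + 4))
        omega
      have hc2 : detZ (v i) (v (i + 4)) = B := hBdef.symm
      rw [hc1, hc2] at hVE
      rw [hVE, hBA, hzdef]
      module
    have hA' : A = 1 := prim_smul A z _ hVE4 hA1 (hprim (i + 4))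
    rw [hA', one_smul] at hVE4
    by_cases hc : i + 4 = i - 1
    · apply NB i
      rw [hc] at hVE4
      rw [hVE4, hzdef]
      ring
    · exact sep v hdet hdisj (i - 1) (i + 4) (Ne.symm hc) (v (i + 4))
        (mem_coneOf_left _ _)
        (by rw [hVE4]; omega) (by rw [e4, hVE4, hz2]; omega)

/-- d = 4, three consecutive nonsingular + a singular cone : impossible -/
lemma lemL4 (hdet : ∀ i, 1 ≤ detZ (v i) (v (i + 1)))
    (hf : ∀ i, 1 ≤ fanF d v i)
    (NB : ∀ k : ZMod d, v k ≠ v (k - 1) + v (k + 1))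
    (hsing : ∃ s : ZMod d, 2 ≤ detZ (v s) (v (s + 1)))
    (hd4 : d = 4)
    (i : ZMod d)
    (h1 : detZ (v i) (v (i + 1)) = 1)
    (h2 : detZ (v (i + 1)) (v (i + 2)) = 1)
    (h3 : detZ (v (i + 2)) (v (i + 3)) = 1) : False := by
  subst hd4
  have e1 : i + 1 + 1 = i + 2 := by ring
  have e2 : i + 2 + 1 = i + 3 := by ring
  have e3 : i + 3 + 1 = i := by
    have : (4 : ZMod 4) = 0 := by decide
    have h4 : i + 3 + 1 = i + 4 := by ring
    rw [h4]
    have : i + 4 = i + 0 := by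
      congr 1
    rw [this, add_zero]
  obtain ⟨p, hpdef⟩ : ∃ p, p = -detZ (v i) (v (i + 2)) := ⟨_, rfl⟩
  have hp : 0 ≤ p := by
    have := lemL hf NB i h1 (by rw [e1]; exact h2)
    rw [e1] at this
    omega
  have hVE2 : v (i + 2) = (-1 : ℤ) • v i + (-p) • v (i + 1) := by
    have hVE := cramerZ (v i) (v (i + 1)) h1 (v (i + 2))
    have hc1 : detZ (v (i + 2)) (v (i + 1)) = -1 := by rw [detZ_skew, h2]
    have hc2 : detZ (v i) (v (i + 2)) = -p := by omega
    rw [hc1, hc2] at hVE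
    exact hVE
  obtain ⟨q, hqdef⟩ : ∃ q, q = -detZ (v (i + 1)) (v (i + 3)) := ⟨_, rfl⟩
  have hq : 0 ≤ q := by
    have := lemL hf NB (i + 1) (by rw [e1]; exact h2) (by rw [e1, e2]; exact h3)
    rw [e1, e2] at this
    omega
  have hVE3 : v (i + 3) = (-1 : ℤ) • v (i + 1) + (-q) • v (i + 2) := by
    have hVE := cramerZ (v (i + 1)) (v (i + 2)) h2 (v (i + 3))
    have hc1 : detZ (v (i + 3)) (v (i + 2)) = -1 := by rw [detZ_skew, h3]
    have hc2 : detZ (v (i + 1)) (v (i + 3)) = -q := by omega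
    rw [hc1, hc2] at hVE
    exact hVE
  -- D_{i+3} = 1 - q p ≥ 1
  have hD3 : detZ (v (i + 3)) (v (i + 3 + 1)) = 1 - q * p := by
    have k2 : detZ (v (i + 1)) (v i) = -1 := by
      have := detZ_skew (v (i + 1)) (v i)
      omega
    rw [e3, hVE3, hVE2]
    simp only [detZ_add_left, detZ_smul_left, detZ_add_right, detZ_smul_right, detZ_self]
    rw [k2]
    ring
  have hd3 := hdet (i + 3)
  have hqp : q * p ≤ 0 := by omega
  have hqp0 : q * p = 0 := le_antisymm hqp (mul_nonneg hq hp)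
  have hD3' : detZ (v (i + 3)) (v (i + 3 + 1)) = 1 := by omega
  obtain ⟨s, hs⟩ := hsing
  have hcases : ∀ s t : ZMod 4, s = t ∨ s = t + 1 ∨ s = t + 2 ∨ s = t + 3 := by decide
  rcases hcases s i with h | h | h | h <;> subst h
  · omega
  · rw [e1] at hs; omega
  · rw [e2] at hs; omega
  · omega

/-- far nonsingular cone : impossible -/
lemma lemL5b (hdet : ∀ i, 1 ≤ detZ (v i) (v (i + 1)))
    (hdisj : ∀ a b : ZMod d, a ≠ b →
      interior (coneOf (v a) (v (a + 1))) ∩ interior (coneOf (v b) (v (b + 1))) = ∅)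
    (hf : ∀ i, 1 ≤ fanF d v i) (hprim : ∀ i, Int.gcd (v i).1 (v i).2 = 1)
    (NB : ∀ k : ZMod d, v k ≠ v (k - 1) + v (k + 1))
    (i j : ZMod d)
    (h1 : detZ (v i) (v (i + 1)) = 1)
    (h2 : detZ (v (i + 1)) (v (i + 2)) = 1)
    (hDj : detZ (v j) (v (j + 1)) = 1)
    (hji : j ≠ i) (hji1 : j ≠ i + 1) (hji2 : j ≠ i + 2) (hjim : j ≠ i - 1) : False := by
  have e1 : i + 1 + 1 = i + 2 := by ring
  have ej : j - 1 + 1 = j := sub_add_cancel j 1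
  -- index inequalities
  have n1 : i ≠ j + 1 := fun h => hjim (by linear_combination -h)
  have n2 : (i : ZMod d) + 1 ≠ j + 1 := fun h => hji (by linear_combination -h)
  have n3 : i ≠ j - 1 := fun h => hji1 (by linear_combination -h)
  have n4 : (i : ZMod d) + 1 ≠ j - 1 := fun h => hji2 (by linear_combination -h)
  have n5 : j + 1 ≠ i := fun h => n1 h.symm
  have n6 : j - 1 ≠ i := fun h => n3 h.symm
  have n7 : j + 1 ≠ i + 1 := fun h => n2 h.symm
  have n8 : j - 1 ≠ i + 1 := fun h => n4 h.symm
  -- p and VE2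
  obtain ⟨p, hpdef⟩ : ∃ p, p = -detZ (v i) (v (i + 2)) := ⟨_, rfl⟩
  have hp : 0 ≤ p := by
    have := lemL hf NB i h1 (by rw [e1]; exact h2)
    rw [e1] at this
    omega
  have hVE2 : v (i + 2) = (-1 : ℤ) • v i + (-p) • v (i + 1) := by
    have hVE := cramerZ (v i) (v (i + 1)) h1 (v (i + 2))
    have hc1 : detZ (v (i + 2)) (v (i + 1)) = -1 := by rw [detZ_skew, h2]
    have hc2 : detZ (v i) (v (i + 2)) = -p := by omega
    rw [hc1, hc2] at hVE
    exact hVE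
  -- w and the two memberships
  set w := v (j + 1) - v j with hwdef
  have hw1 : detZ (v (j + 1)) w = 1 := by
    rw [hwdef, detZ_sub_right, detZ_self]
    have := detZ_skew (v (j + 1)) (v j)
    linarith
  have hw2 : 1 ≤ detZ w (v (j + 1 + 1)) := lemWM hdet hf hprim NB j hDj
  have hmw1 : detZ (-w) (v j) = 1 := by
    rw [detZ_neg_left, hwdef, detZ_sub_left, detZ_self]
    have := detZ_skew (v (j + 1)) (v j)
    linarith
  have hmw2 : 1 ≤ detZ (v (j - 1)) (-w) := by
    have := lemZM hdet hf hprim NB j hDj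
    have hneg : -w = v j - v (j + 1) := by rw [hwdef]; ring
    rw [hneg]
    exact this
  have hmemw : toR2 w ∈ coneOf (v (j + 1)) (v (j + 1 + 1)) :=
    mem_coneOf_of_det _ _ _ (hdet (j + 1)) (by omega) (by omega)
  have hmemmw : toR2 (-w) ∈ coneOf (v (j - 1)) (v (j - 1 + 1)) := by
    refine mem_coneOf_of_det _ _ _ ?_ ?_ (by omega)
    · exact hdet (j - 1)
    · rw [ej]; omega
  -- A and B
  obtain ⟨A, hAdef⟩ : ∃ A, A = detZ w (v (i + 1)) := ⟨_, rfl⟩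
  obtain ⟨B, hBdef⟩ : ∃ B, B = detZ (v i) w := ⟨_, rfl⟩
  -- dets of w with i-side cones
  have hwi2 : detZ w (v (i + 2)) = B - p * A := by
    rw [hVE2]
    simp only [detZ_add_right, detZ_smul_right]
    have k1 : detZ w (v i) = -B := by
      have := detZ_skew (v i) w
      omega
    rw [k1, ← hAdef]
    ring
  -- T instances
  have hT1 : ¬(0 < B ∧ 0 < A) := by
    rintro ⟨u1, u2⟩
    exact sep v hdet hdisj i (j + 1) n1 w hmemw (by omega) (by omega)
  have hT2 : ¬(0 < -A ∧ 0 < B - p * A) := by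
    rintro ⟨u1, u2⟩
    apply sep v hdet hdisj (i + 1) (j + 1) n2 w hmemw
    · have := detZ_skew (v (i + 1)) w
      omega
    · rw [e1]
      omega
  have hT3 : ¬(0 < -B ∧ 0 < -A) := by
    rintro ⟨u1, u2⟩
    apply sep v hdet hdisj i (j - 1) n3 (-w) hmemmw
    · rw [detZ_neg_right]
      omega
    · rw [detZ_neg_left]
      have := detZ_skew (v (i + 1)) w
      omega
  have hT4 : ¬(0 < A ∧ 0 < p * A - B) := by
    rintro ⟨u1, u2⟩
    apply sep v hdet hdisj (i + 1) (j - 1) n4 (-w) hmemmw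
    · rw [detZ_neg_right]
      have := detZ_skew (v (i + 1)) w
      omega
    · rw [e1, detZ_neg_left]
      omega
  -- final case analysis
  have hwVE : w = A • v i + B • v (i + 1) := by
    have hVE := cramerZ (v i) (v (i + 1)) h1 w
    rw [← hAdef, ← hBdef] at hVE
    exact hVE
  have hjw : detZ (v j) w = 1 := by
    rw [hwdef, detZ_sub_right, detZ_self]
    linarith
  rcases lt_trichotomy A 0 with hA | hA | hA
  · -- A < 0
    have hBle : B ≤ p * A := by
      by_contra hc
      exact hT2 ⟨by omega, by omega⟩
    have hBge : 0 ≤ B := by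
      by_contra hc
      exact hT3 ⟨by omega, by omega⟩
    have hpA : p * A ≤ 0 := mul_nonpos_of_nonneg_of_nonpos hp hA.le
    have hB0 : B = 0 := le_antisymm (by omega) hBge
    have hAX : A * detZ (v j) (v i) = 1 := by
      have : detZ (v j) w = A * detZ (v j) (v i) + B * detZ (v j) (v (i + 1)) := by
        rw [hwVE]
        simp only [detZ_add_right, detZ_smul_right]
      rw [hjw] at this
      rw [hB0] at this
      linarith
    have hAm1 : A = -1 := by
      rcases Int.isUnit_iff.mp (IsUnit.of_mul_eq_one _ hAX) with h | h
      · omega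
      · exact h
    have hmwvi : -w = v i := by
      rw [hwVE, hAm1, hB0]
      module
    apply sep v hdet hdisj (j - 1) i n6 (v i) (mem_coneOf_left _ _)
    · rw [← hmwvi]
      omega
    · rw [ej, ← hmwvi]
      omega
  · -- A = 0
    have hBX : B * detZ (v j) (v (i + 1)) = 1 := by
      have : detZ (v j) w = A * detZ (v j) (v i) + B * detZ (v j) (v (i + 1)) := by
        rw [hwVE]
        simp only [detZ_add_right, detZ_smul_right]
      rw [hjw, hA] at this
      linarith
    rcases Int.isUnit_iff.mp (IsUnit.of_mul_eq_one _ hBX) with hB | hB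
    · -- B = 1 : w = v (i+1)
      have hwvi : w = v (i + 1) := by
        rw [hwVE, hA, hB]
        module
      apply sep v hdet hdisj (j + 1) (i + 1) n7 (v (i + 1)) (mem_coneOf_left _ _)
      · rw [← hwvi]
        omega
      · rw [← hwvi]
        omega
    · -- B = -1 : -w = v (i+1)
      have hmwvi : -w = v (i + 1) := by
        rw [hwVE, hA, hB]
        module
      apply sep v hdet hdisj (j - 1) (i + 1) n8 (v (i + 1)) (mem_coneOf_left _ _)
      · rw [← hmwvi]
        omega
      · rw [ej, ← hmwvi]
        omega
  · -- A > 0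
    have hBle : B ≤ 0 := by
      by_contra hc
      exact hT1 ⟨by omega, by omega⟩
    have hBge : p * A ≤ B := by
      by_contra hc
      exact hT4 ⟨by omega, by omega⟩
    have hpA : 0 ≤ p * A := mul_nonneg hp hA.le
    have hB0 : B = 0 := le_antisymm hBle (by omega)
    have hAX : A * detZ (v j) (v i) = 1 := by
      have : detZ (v j) w = A * detZ (v j) (v i) + B * detZ (v j) (v (i + 1)) := by
        rw [hwVE]
        simp only [detZ_add_right, detZ_smul_right]
      rw [hjw, hB0] at this
      linarith
    have hA1 : A = 1 := by
      rcases Int.isUnit_iff.mp (IsUnit.of_mul_eq_one _ hAX) with h | h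
      · exact h
      · omega
    have hwvi : w = v i := by
      rw [hwVE, hA1, hB0]
      module
    apply sep v hdet hdisj (j + 1) i n5 (v i) (mem_coneOf_left _ _)
    · rw [← hwvi]
      omega
    · rw [← hwvi]
      omega



/-- three consecutive nonsingular cones (d ≥ 4, with a singular cone) : impossible -/
lemma lemTriple (hdet : ∀ i, 1 ≤ detZ (v i) (v (i + 1)))
    (hdisj : ∀ a b : ZMod d, a ≠ b →
      interior (coneOf (v a) (v (a + 1))) ∩ interior (coneOf (v b) (v (b + 1))) = ∅)
    (hf : ∀ i, 1 ≤ fanF d v i) (hprim : ∀ i, Int.gcd (v i).1 (v i).2 = 1)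
    (NB : ∀ k : ZMod d, v k ≠ v (k - 1) + v (k + 1))
    (hsing : ∃ s : ZMod d, 2 ≤ detZ (v s) (v (s + 1)))
    (hd4 : 4 ≤ d) (k : ZMod d)
    (h1 : detZ (v k) (v (k + 1)) = 1)
    (h2 : detZ (v (k + 1)) (v (k + 2)) = 1)
    (h3 : detZ (v (k + 2)) (v (k + 3)) = 1) : False := by
  haveI : NeZero d := ⟨by omega⟩
  by_cases h4 : k + 3 = k - 1
  · -- d = 4
    have h40 : (4 : ZMod d) = 0 := by linear_combination h4
    have hc : ((4 : ℕ) : ZMod d) = 0 := by push_cast; exact h40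
    have hdvd := (ZMod.natCast_eq_zero_iff 4 d).mp hc
    have hle := Nat.le_of_dvd (by norm_num) hdvd
    have hd44 : d = 4 := by omega
    exact lemL4 hdet hf NB hsing hd44 k h1 h2 h3
  · have hne31 : k + 2 ≠ k - 1 := by
      intro hcc
      have h30 : (3 : ZMod d) = 0 := by linear_combination hcc
      have hc : ((3 : ℕ) : ZMod d) = 0 := by push_cast; exact h30
      have hdvd := (ZMod.natCast_eq_zero_iff 3 d).mp hc
      have hle := Nat.le_of_dvd (by norm_num) hdvd
      omega
    exact lemL5a hdet hdisj hf hprim NB k h1 h2 h3 hne31 h4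

end FanMain

/-- Lemma 3.2: let `v` be singular LDP fan data that cannot be obtained by blowing up
LDP fan data at a nonsingular cone (i.e. no deletion of a vector `v_k = v_{k−1} + v_{k+1}`
yields LDP fan data).  If two consecutive cones `σ_i`, `σ_{i+1}` are nonsingular,
then every other cone is singular. -/
theorem two_consecutive_nonsingular_rest_singular (d : ℕ) (v : ZMod d → ℤ × ℤ)
    (h : IsLDPFanData d v)
    (hsing : ∃ i : ZMod d, 2 ≤ detZ (v i) (v (i + 1)))
    (hnb : ∀ k : ZMod d, 4 ≤ d → v k = v (k - 1) + v (k + 1) →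
      ¬ IsLDPFanData (d - 1) (deleteAt v k))
    (i : ZMod d)
    (h1 : detZ (v i) (v (i + 1)) = 1)
    (h2 : detZ (v (i + 1)) (v (i + 2)) = 1) :
    ∀ j : ZMod d, j ≠ i → j ≠ i + 1 → 2 ≤ detZ (v j) (v (j + 1)) := by
  obtain ⟨⟨hd3, hprim, hdet, hcover, hdisj⟩, hf⟩ := h
  intro j hj1 hj2
  by_contra hlt
  push_neg at hlt
  have hDj : detZ (v j) (v (j + 1)) = 1 := le_antisymm (by omega) (hdet j)
  rcases Nat.lt_or_ge d 4 with hd | hd4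
  · -- d = 3
    have hd3' : d = 3 := by omega
    subst hd3'
    obtain ⟨s, hs⟩ := hsing
    have hex : ∀ s t : ZMod 3, s = t ∨ s = t + 1 ∨ s = t + 2 := by decide
    have e1 : i + 1 + 1 = i + 2 := by ring
    rcases hex s i with h | h | h <;> subst h
    · omega
    · rw [e1] at hs; omega
    · rcases hex j i with h | h | h
      · exact hj1 h
      · exact hj2 h
      · subst h
        omega
  · -- d ≥ 4
    have hldp : IsLDPFanData d v := ⟨⟨hd3, hprim, hdet, hcover, hdisj⟩, hf⟩
    have NB : ∀ k : ZMod d, v k ≠ v (k - 1) + v (k + 1) := by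
      intro k hk
      exact hnb k hd4 hk (blowdown d v hd4 hldp k hk)
    by_cases hA : j = i + 2
    · subst hA
      have e2 : i + 2 + 1 = i + 3 := by ring
      rw [e2] at hDj
      exact lemTriple hdet hdisj hf hprim NB hsing hd4 i h1 h2 hDj
    · by_cases hB : j = i - 1
      · subst hB
        have ei1 : i - 1 + 1 = i := sub_add_cancel i 1
        have ei2 : i - 1 + 2 = i + 1 := by ring
        have ei3 : i - 1 + 3 = i + 2 := by ring
        apply lemTriple hdet hdisj hf hprim NB hsing hd4 (i - 1) hDj
        · rw [ei1, ei2]; exact h1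
        · rw [ei2, ei3]; exact h2
      · exact lemL5b hdet hdisj hf hprim NB i j h1 h2 hDj hj1 hj2 hA hB
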